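/- For p ≥ 0 and |x| < 1, the degenerate differential operator (x d/dx + r)_{p,λ} = (x d/dx + r)(x d/dx + r - λ)⋯(x d/dx + r - (p-1)λ) applied to 1/(1-x) equals ∑_{n=0}^∞ (n+r)_{p,λ} x^n. -/

import Mathlib

/-- Generalized falling factorial `(y)_{m,λ} = y(y-λ)⋯(y-(m-1)λ)`. -/
noncomputable def degFallFact (y l : ℝ) (m : ℕ) : ℝ :=
  ∏ i ∈ Finset.range m, (y - i * l)

/-- The degenerate differential operator
`(x d/dx + r)_{p,λ} = (x d/dx + r)(x d/dx + r - λ)⋯(x d/dx + r - (p-1)λ)`,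
the innermost (rightmost) factor being applied first. -/
noncomputable def degOp (r l : ℝ) : ℕ → (ℝ → ℝ) → (ℝ → ℝ)
  | 0, f => f
  | p + 1, f => degOp r l p (fun x => x * deriv f x + (r - p * l) * f x)

/-- Peeling the *outermost* factor of the degenerate operator. -/
lemma degOp_succ (l : ℝ) (p : ℕ) (r : ℝ) (f : ℝ → ℝ) :
    degOp r l (p + 1) f =
      fun x => x * deriv (degOp (r - l) l p f) x + r * degOp (r - l) l p f x := by
  induction p generalizing r f with
  | zero =>
    rw [degOp]
    simp [degOp]
  | succ p ih =>
    rw [degOp]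
    have hg : (fun x => x * deriv f x + (r - ((p + 1 : ℕ) : ℝ) * l) * f x)
        = (fun x => x * deriv f x + ((r - l) - (p : ℝ) * l) * f x) := by
      funext x; push_cast; ring
    rw [hg, ih]
    have : degOp (r - l) l (p + 1) f
        = degOp (r - l) l p (fun x => x * deriv f x + ((r - l) - (p : ℝ) * l) * f x) := by
      rw [degOp]
    rw [this]

lemma mul_cast_pow_sub_one (n : ℕ) (x : ℝ) : x * ((n : ℝ) * x ^ (n - 1)) = n * x ^ n := by
  cases n with
  | zero => simp
  | succ m => push_cast; rw [pow_succ]; ring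

/-- Termwise differentiation of a power series on the unit ball. -/
lemma hasSum_deriv_of_hasSum (a : ℕ → ℝ) (C : ℝ) (k : ℕ)
    (hC : ∀ n : ℕ, |a n| ≤ C * ((n : ℝ) + 1) ^ k) (G : ℝ → ℝ)
    (hG : ∀ y : ℝ, |y| < 1 → HasSum (fun n : ℕ => a n * y ^ n) (G y))
    (x : ℝ) (hx : |x| < 1) :
    HasSum (fun n : ℕ => a n * ((n : ℝ) * x ^ (n - 1))) (deriv G x) := by
  have hC0 : 0 ≤ C := le_trans (abs_nonneg _) (by simpa using hC 0)
  set R : ℝ := (1 + |x|) / 2 with hR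
  have hR0 : 0 < R := by positivity
  have hxR : |x| < R := by rw [hR]; linarith
  have hR1 : R < 1 := by rw [hR]; linarith
  -- the dominating summable series
  set u : ℕ → ℝ := fun n => C / R * (((n : ℝ) + 1) ^ (k + 1) * R ^ n) with hu
  have hsum_u : Summable u := by
    have h : Summable (fun n : ℕ => (n : ℝ) ^ (k + 1) * R ^ n) :=
      summable_pow_mul_geometric_of_norm_lt_one (k + 1)
        (by rw [Real.norm_eq_abs, abs_of_pos hR0]; exact hR1)
    have h2 := (summable_nat_add_iff 1).mpr h
    have h3 := h2.div_const R
    have h4 : Summable (fun n : ℕ => ((n : ℝ) + 1) ^ (k + 1) * R ^ n) := by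
      refine h3.congr fun n => ?_
      push_cast
      rw [pow_succ R n]
      field_simp
    exact h4.mul_left _
  -- bound on the differentiated terms
  have hbound : ∀ (n : ℕ), ∀ y ∈ Metric.ball (0 : ℝ) R,
      ‖a n * ((n : ℝ) * y ^ (n - 1))‖ ≤ u n := by
    intro n y hy
    have hyR : |y| < R := by simpa [Real.dist_eq] using hy
    rw [hu]
    cases n with
    | zero =>
      simp only [Nat.cast_zero, zero_mul, mul_zero, norm_zero]
      positivity
    | succ m =>
      rw [Real.norm_eq_abs, abs_mul, abs_mul, abs_pow, Nat.add_sub_cancel]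
      have h1 : |a (m + 1)| ≤ C * ((m : ℝ) + 1 + 1) ^ k := by
        have := hC (m + 1); push_cast at this ⊢; linarith
      have h2 : |((m + 1 : ℕ) : ℝ)| = (m : ℝ) + 1 := by
        rw [Nat.abs_cast]; push_cast; ring
      have h3 : |y| ^ m ≤ R ^ m := pow_le_pow_left₀ (abs_nonneg _) hyR.le m
      calc |a (m+1)| * (|((m + 1 : ℕ) : ℝ)| * |y| ^ m)
          ≤ (C * ((m : ℝ) + 1 + 1) ^ k) * (((m:ℝ)+1) * R ^ m) := by
            rw [h2]
            apply mul_le_mul h1 (by gcongr) (by positivity) (by positivity)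
        _ ≤ (C * ((m : ℝ) + 1 + 1) ^ k) * (((m:ℝ)+1+1) * R ^ m) := by
            apply mul_le_mul_of_nonneg_left _ (by positivity)
            apply mul_le_mul_of_nonneg_right (by linarith) (by positivity)
        _ = C / R * ((((m+1:ℕ) : ℝ) + 1) ^ (k + 1) * R ^ (m+1)) := by
            push_cast
            rw [pow_succ R m, pow_succ ((m:ℝ)+1+1) k]
            field_simp
  -- the sum function
  set T : ℝ → ℝ := fun y => ∑' n : ℕ, a n * y ^ n with hT
  have hderivT : HasDerivAt T (∑' n : ℕ, a n * ((n : ℝ) * x ^ (n - 1))) x := by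
    refine hasDerivAt_tsum_of_isPreconnected hsum_u Metric.isOpen_ball
      (convex_ball (0:ℝ) R).isPreconnected
      (fun n y hy => ((hasDerivAt_pow n y).const_mul (a n)))
      hbound (Metric.mem_ball_self hR0) ?_ (by simpa [Real.dist_eq] using hxR)
    exact (hG 0 (by norm_num)).summable
  have hsummable : Summable (fun n : ℕ => a n * ((n : ℝ) * x ^ (n - 1))) := by
    refine Summable.of_norm_bounded hsum_u fun n => ?_
    exact hbound n x (by simpa [Real.dist_eq] using hxR)
  have hEq : deriv G x = deriv T x := by
    apply Filter.EventuallyEq.deriv_eq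
    have hmem : Metric.ball (0:ℝ) 1 ∈ nhds x :=
      Metric.isOpen_ball.mem_nhds (by simpa [Real.dist_eq] using hx)
    filter_upwards [hmem] with y hy
    exact (hG y (by simpa [Real.dist_eq] using hy)).tsum_eq.symm
  rw [hEq, hderivT.deriv]
  exact hsummable.hasSum

/-- The key statement with a real shift parameter. -/
lemma degOp_one_div_real (l : ℝ) (p : ℕ) : ∀ (r : ℝ) (x : ℝ), |x| < 1 →
    HasSum (fun n : ℕ => degFallFact (n + r) l p * x ^ n)
      (degOp r l p (fun y => 1 / (1 - y)) x) := by
  induction p with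
  | zero =>
    intro r x hx
    simpa [degFallFact, degOp, one_div] using hasSum_geometric_of_abs_lt_one hx
  | succ p ih =>
    intro r x hx
    rw [degOp_succ]
    set G : ℝ → ℝ := degOp (r - l) l p (fun y => 1 / (1 - y)) with hGdef
    set a : ℕ → ℝ := fun n => degFallFact ((n : ℝ) + (r - l)) l p with ha
    have hG : ∀ y : ℝ, |y| < 1 → HasSum (fun n : ℕ => a n * y ^ n) (G y) :=
      fun y hy => ih (r - l) y hy
    -- polynomial bound on the coefficients
    set B : ℝ := |r - l| + p * |l| + 1 with hB
    have hbound : ∀ n : ℕ, |a n| ≤ B ^ p * ((n : ℝ) + 1) ^ p := by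
      intro n
      rw [ha]
      simp only [degFallFact]
      calc |∏ i ∈ Finset.range p, ((n : ℝ) + (r - l) - i * l)|
          = ∏ i ∈ Finset.range p, |(n : ℝ) + (r - l) - i * l| := by
            rw [Finset.abs_prod]
        _ ≤ ∏ i ∈ Finset.range p, (B * ((n : ℝ) + 1)) := by
            apply Finset.prod_le_prod (fun i _ => abs_nonneg _)
            intro i hi
            have hip : (i : ℝ) ≤ p := by
              exact_mod_cast (Finset.mem_range.mp hi).le
            have h1 : |(n : ℝ) + (r - l) - i * l| ≤ (n : ℝ) + |r - l| + i * |l| := by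
              calc |(n : ℝ) + (r - l) - i * l| ≤ |(n:ℝ) + (r-l)| + |(i:ℝ) * l| := abs_sub _ _
                _ ≤ |(n:ℝ)| + |r - l| + (i:ℝ) * |l| := by
                    rw [abs_mul, Nat.abs_cast]
                    have := abs_add_le (n:ℝ) (r - l)
                    linarith
                _ = (n : ℝ) + |r - l| + i * |l| := by rw [Nat.abs_cast]
            have h2 : (i:ℝ) * |l| ≤ (p:ℝ) * |l| :=
              mul_le_mul_of_nonneg_right hip (abs_nonneg _)
            have h3 : (n : ℝ) + |r - l| + (p:ℝ) * |l| ≤ B * ((n:ℝ) + 1) := by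
              rw [hB]
              have hn0 : (0:ℝ) ≤ (n:ℝ) := Nat.cast_nonneg n
              nlinarith [abs_nonneg (r - l), abs_nonneg l,
                mul_nonneg (Nat.cast_nonneg p) (abs_nonneg l)]
            linarith
        _ = B ^ p * ((n : ℝ) + 1) ^ p := by
            rw [Finset.prod_const, Finset.card_range, mul_pow]
    have hd : HasSum (fun n : ℕ => a n * ((n : ℝ) * x ^ (n - 1))) (deriv G x) :=
      hasSum_deriv_of_hasSum a (B ^ p) p hbound G hG x hx
    have h1 := hd.mul_left x
    have h2 := (hG x hx).mul_left r
    have hfun : (fun n : ℕ => degFallFact ((n : ℝ) + r) l (p + 1) * x ^ n)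
        = fun n : ℕ => x * (a n * ((n : ℝ) * x ^ (n - 1))) + r * (a n * x ^ n) := by
      funext n
      have hpeel : degFallFact ((n : ℝ) + r) l (p + 1) = a n * ((n : ℝ) + r) := by
        rw [ha]
        simp only [degFallFact]
        rw [Finset.prod_range_succ']
        congr 1
        · apply Finset.prod_congr rfl
          intro i _
          push_cast
          ring
        · push_cast; ring
      have hxn : x * ((n : ℝ) * x ^ (n - 1)) = (n : ℝ) * x ^ n := mul_cast_pow_sub_one n x
      rw [hpeel]
      linear_combination (-(a n)) * hxn
    show HasSum _ (x * deriv G x + r * G x)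
    rw [hfun]
    exact h1.add h2

/-- for `|x| < 1`,
`(x d/dx + r)_{p,λ} (1/(1-x)) = ∑_{n≥0} (n+r)_{p,λ} x^n`. -/
theorem degOp_one_div (l : ℝ) (p r : ℕ) (x : ℝ) (hx : |x| < 1) :
    HasSum (fun n : ℕ => degFallFact (n + r) l p * x ^ n)
      (degOp r l p (fun y => 1 / (1 - y)) x) := by
  exact degOp_one_div_real l p r x hx
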